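/- Assume P, H, V, Θ and Ô are as in the context, assume the generic-points property (for every h ∈ H and v ∈ V with h ∩ v ≠ ∅ there exists a point of h ∩ v belonging to no member of H ∪ V other than h and v), and assume the graph diameter of Θ is at least 3 (equivalently ôdiam ≥ 4). If there exist vertices i, i', j, j' of Θ with i adjacent to i' and j adjacent to j' such that Ô(i,j) = ôdiam and Ô(i',j') = ôdiam, then diam(P) = ôdiam − 1; otherwise diam(P) = ôdiam − 2. -/

import Mathlib

/-- A segment with endpoints `p` and `q` is axis-parallel: horizontal (equal
`y`-coordinates) or vertical (equal `x`-coordinates). -/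
def AxisParallel (p q : ℝ × ℝ) : Prop := p.2 = q.2 ∨ p.1 = q.1

/-- `f` describes a rectilinear path from `p` to `q` in `P` with `k ≥ 1` links:
`f 0 = p`, `f k = q`, and each closed segment from `f t` to `f (t+1)` is contained
in `P` and is axis-parallel. -/
def IsRectPath (P : Set (ℝ × ℝ)) (p q : ℝ × ℝ) (k : ℕ) (f : ℕ → ℝ × ℝ) : Prop :=
  1 ≤ k ∧ f 0 = p ∧ f k = q ∧
    ∀ t < k, segment ℝ (f t) (f (t + 1)) ⊆ P ∧ AxisParallel (f t) (f (t + 1))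

/-- The rectilinear link distance: the minimum link length of a rectilinear path
from `p` to `q` in `P`. -/
noncomputable def rld (P : Set (ℝ × ℝ)) (p q : ℝ × ℝ) : ℕ :=
  sInf {k : ℕ | ∃ f : ℕ → ℝ × ℝ, IsRectPath P p q k f}

/-- A box: a closed axis-aligned rectangle `[a,b] × [c,d]` with `a < b` and `c < d`. -/
def IsBox (B : Set (ℝ × ℝ)) : Prop :=
  ∃ a b c d : ℝ, a < b ∧ c < d ∧ B = Set.Icc a b ×ˢ Set.Icc c d

/-- The graph of oriented distances `Θ`: the bipartite graph on the (disjoint) union of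
the families `H` and `V`, with an edge between `h ∈ H` and `v ∈ V` exactly when
`h ∩ v ≠ ∅`. -/
def thetaGraph (H V : Set (Set (ℝ × ℝ))) :
    SimpleGraph {B : Set (ℝ × ℝ) // B ∈ H ∪ V} where
  Adj x y := x ≠ y ∧
    ((x.1 ∈ H ∧ y.1 ∈ V) ∨ (x.1 ∈ V ∧ y.1 ∈ H)) ∧ (x.1 ∩ y.1).Nonempty
  symm := by
    constructor
    rintro x y ⟨hxy, hor, hne⟩
    refine ⟨hxy.symm, ?_, by rwa [Set.inter_comm]⟩
    rcases hor with ⟨h1, h2⟩ | ⟨h1, h2⟩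
    · exact Or.inr ⟨h2, h1⟩
    · exact Or.inl ⟨h2, h1⟩
  loopless := by constructor; rintro x ⟨hxx, -⟩; exact hxx rfl

/-- The oriented distance `Ô(i,j)`: the graph distance in `Θ` plus one. -/
noncomputable def oDist (H V : Set (Set (ℝ × ℝ)))
    (i j : {B : Set (ℝ × ℝ) // B ∈ H ∪ V}) : ℕ :=
  (thetaGraph H V).dist i j + 1

/-- `H` and `V` form a good decomposition of `P`: they are finite families of boxes
contained in `P`; every horizontal (resp. vertical) segment contained in `P` lies in
some member of `H` (resp. `V`); for `h ∈ H` and `v ∈ V` meeting each other, `h ∩ v`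
is the product of the `x`-projection of `v` with the `y`-projection of `h`; and the
graph of oriented distances is connected. -/
structure GoodDecomp (P : Set (ℝ × ℝ)) (H V : Set (Set (ℝ × ℝ))) : Prop where
  finH : H.Finite
  finV : V.Finite
  box : ∀ B ∈ H ∪ V, IsBox B
  sub : ∀ B ∈ H ∪ V, B ⊆ P
  covH : ∀ p q : ℝ × ℝ, p.2 = q.2 → segment ℝ p q ⊆ P → ∃ h ∈ H, segment ℝ p q ⊆ h
  covV : ∀ p q : ℝ × ℝ, p.1 = q.1 → segment ℝ p q ⊆ P → ∃ v ∈ V, segment ℝ p q ⊆ v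
  cross : ∀ h ∈ H, ∀ v ∈ V, (h ∩ v).Nonempty →
    h ∩ v = (Prod.fst '' v) ×ˢ (Prod.snd '' h)
  conn : (thetaGraph H V).Connected

/-- `ôdiam`: the maximum of `Ô(i,j)` over all vertices `i, j` of `Θ`. -/
noncomputable def oDiamTheta (H V : Set (Set (ℝ × ℝ))) : ℕ :=
  sSup {m : ℕ | ∃ i j : {B : Set (ℝ × ℝ) // B ∈ H ∪ V}, oDist H V i j = m}

/-- `diam(P)`: the supremum of `rld(p,q)` over all `p, q ∈ P`. -/
noncomputable def rldDiam (P : Set (ℝ × ℝ)) : ℕ :=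
  sSup {m : ℕ | ∃ p ∈ P, ∃ q ∈ P, rld P p q = m}

open Set Filter

section Basics

variable {P : Set (ℝ × ℝ)} {H V : Set (Set (ℝ × ℝ))}

lemma seg_horiz_mem {p q z : ℝ × ℝ} (hpq : p.2 = q.2) :
    z ∈ segment ℝ p q ↔ z.2 = p.2 ∧ z.1 ∈ segment ℝ p.1 q.1 := by
  rw [segment_eq_image, segment_eq_image]
  constructor
  · rintro ⟨θ, hθ, rfl⟩
    constructor
    · simp only [Prod.snd_add, Prod.smul_snd, smul_eq_mul, ← hpq]; ring
    · exact ⟨θ, hθ, rfl⟩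
  · rintro ⟨hz2, θ, hθ, hz1⟩
    refine ⟨θ, hθ, ?_⟩
    ext
    · exact hz1
    · simp only [Prod.snd_add, Prod.smul_snd, smul_eq_mul, ← hpq, hz2]; ring

lemma seg_vert_mem {p q z : ℝ × ℝ} (hpq : p.1 = q.1) :
    z ∈ segment ℝ p q ↔ z.1 = p.1 ∧ z.2 ∈ segment ℝ p.2 q.2 := by
  rw [segment_eq_image, segment_eq_image]
  constructor
  · rintro ⟨θ, hθ, rfl⟩
    constructor
    · simp only [Prod.fst_add, Prod.smul_fst, smul_eq_mul, ← hpq]; ring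
    · exact ⟨θ, hθ, rfl⟩
  · rintro ⟨hz1, θ, hθ, hz2⟩
    refine ⟨θ, hθ, ?_⟩
    ext
    · simp only [Prod.fst_add, Prod.smul_fst, smul_eq_mul, ← hpq, hz1]; ring
    · exact hz2

lemma seg_merge_h {f0 f1 f2 : ℝ × ℝ} (h01 : f0.2 = f1.2) (h12 : f1.2 = f2.2) :
    segment ℝ f0 f2 ⊆ segment ℝ f0 f1 ∪ segment ℝ f1 f2 := by
  intro z hz
  rw [seg_horiz_mem (h01.trans h12)] at hz
  obtain ⟨hz2, hz1⟩ := hz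
  rw [segment_eq_uIcc] at hz1
  rcases Set.uIcc_subset_uIcc_union_uIcc (b := f1.1) hz1 with h | h
  · left; rw [seg_horiz_mem h01]; exact ⟨hz2, by rwa [segment_eq_uIcc]⟩
  · right; rw [seg_horiz_mem h12]; exact ⟨hz2.trans h01, by rwa [segment_eq_uIcc]⟩

lemma seg_merge_v {f0 f1 f2 : ℝ × ℝ} (h01 : f0.1 = f1.1) (h12 : f1.1 = f2.1) :
    segment ℝ f0 f2 ⊆ segment ℝ f0 f1 ∪ segment ℝ f1 f2 := by
  intro z hz
  rw [seg_vert_mem (h01.trans h12)] at hz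
  obtain ⟨hz1, hz2⟩ := hz
  rw [segment_eq_uIcc] at hz2
  rcases Set.uIcc_subset_uIcc_union_uIcc (b := f1.2) hz2 with h | h
  · left; rw [seg_vert_mem h01]; exact ⟨hz1, by rwa [segment_eq_uIcc]⟩
  · right; rw [seg_vert_mem h12]; exact ⟨hz1.trans h01, by rwa [segment_eq_uIcc]⟩

end Basics
section BoxFacts

variable {P : Set (ℝ × ℝ)} {H V : Set (Set (ℝ × ℝ))}

lemma IsBox.nonempty {B : Set (ℝ × ℝ)} (h : IsBox B) : B.Nonempty := by
  obtain ⟨a, b, c, d, hab, hcd, rfl⟩ := h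
  exact ⟨(a, c), by simp [hab.le, hcd.le]⟩

lemma IsBox.convex {B : Set (ℝ × ℝ)} (h : IsBox B) : Convex ℝ B := by
  obtain ⟨a, b, c, d, hab, hcd, rfl⟩ := h
  exact (convex_Icc a b).prod (convex_Icc c d)

lemma GoodDecomp.mem_H_of_mem (hgood : GoodDecomp P H V) {p : ℝ × ℝ} (hp : p ∈ P) :
    ∃ h ∈ H, p ∈ h := by
  obtain ⟨h, hH, hsub⟩ := hgood.covH p p rfl (by rw [segment_same]; exact Set.singleton_subset_iff.2 hp)
  exact ⟨h, hH, hsub (by rw [segment_same]; exact rfl)⟩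

lemma GoodDecomp.mem_V_of_mem (hgood : GoodDecomp P H V) {p : ℝ × ℝ} (hp : p ∈ P) :
    ∃ v ∈ V, p ∈ v := by
  obtain ⟨v, hV, hsub⟩ := hgood.covV p p rfl (by rw [segment_same]; exact Set.singleton_subset_iff.2 hp)
  exact ⟨v, hV, hsub (by rw [segment_same]; exact rfl)⟩

/-- pigeonhole-limit: a sequence of points of `P` converging to `z`, each lying in
some member of a finite family of boxes, gives one member containing `z` together
with infinitely many of the points. -/
lemma pigeonLimit {fam : Set (Set (ℝ × ℝ))} (hfin : fam.Finite)
    (hbox : ∀ F ∈ fam, IsBox F) (g : ℕ → ℝ × ℝ) (hg : ∀ n, ∃ F ∈ fam, g n ∈ F)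
    (z : ℝ × ℝ) (hT : Filter.Tendsto g Filter.atTop (nhds z)) :
    ∃ F ∈ fam, z ∈ F ∧ ∃ n, g n ∈ F := by
  have hinf : ∃ F ∈ fam, {n : ℕ | g n ∈ F}.Infinite := by
    by_contra hall
    push_neg at hall
    have : (Set.univ : Set ℕ) ⊆ ⋃ F ∈ fam, {n : ℕ | g n ∈ F} := by
      intro n _
      obtain ⟨F, hF, hgF⟩ := hg n
      exact Set.mem_biUnion hF hgF
    have hfin2 : (Set.univ : Set ℕ).Finite :=
      Set.Finite.subset (Set.Finite.biUnion hfin (fun F hF => hall F hF)) this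
    exact Set.infinite_univ hfin2
  obtain ⟨F, hF, hI⟩ := hinf
  have hclosed : IsClosed F := by
    obtain ⟨a, b, c, d, _, _, rfl⟩ := hbox F hF
    exact (isClosed_Icc).prod isClosed_Icc
  have hfreq : ∃ᶠ n in Filter.atTop, g n ∈ F := by
    rw [Filter.frequently_atTop]
    intro N
    obtain ⟨n, hn, hNn⟩ := hI.exists_gt N
    exact ⟨n, hNn.le, hn⟩
  have hz : z ∈ closure F := mem_closure_of_frequently_of_tendsto hfreq hT
  rw [hclosed.closure_eq] at hz
  obtain ⟨n, hn, -⟩ := hI.exists_gt 0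
  exact ⟨F, hF, hz, n, hn⟩

/-- escape lemma, horizontal version: if `B ∈ H` and a horizontal sequence of points
of `P` converges to a point of `B` while staying outside `B`, contradiction. -/
lemma escapeH (hgood : GoodDecomp P H V) {B : Set (ℝ × ℝ)} (hBH : B ∈ H)
    (y0 L : ℝ) (x : ℕ → ℝ) (hP : ∀ n, (x n, y0) ∈ P)
    (hT : Filter.Tendsto x Filter.atTop (nhds L)) (hLB : (L, y0) ∈ B)
    (hNB : ∀ n, (x n, y0) ∉ B) : False := by
  have hg : ∀ n, ∃ F ∈ V, (x n, y0) ∈ F := fun n => hgood.mem_V_of_mem (hP n)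
  have hT2 : Filter.Tendsto (fun n => ((x n : ℝ), y0)) Filter.atTop (nhds (L, y0)) :=
    hT.prodMk_nhds tendsto_const_nhds
  obtain ⟨v, hvV, hzv, n, hnv⟩ := pigeonLimit hgood.finV
    (fun F hF => hgood.box F (Or.inr hF)) _ hg (L, y0) hT2
  have hne : (B ∩ v).Nonempty := ⟨(L, y0), hLB, hzv⟩
  have hcross := hgood.cross B hBH v hvV hne
  apply hNB n
  have : (x n, y0) ∈ (Prod.fst '' v) ×ˢ (Prod.snd '' B) :=
    ⟨⟨(x n, y0), hnv, rfl⟩, ⟨(L, y0), hLB, rfl⟩⟩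
  rw [← hcross] at this
  exact this.1

/-- escape lemma, vertical version. -/
lemma escapeV (hgood : GoodDecomp P H V) {B : Set (ℝ × ℝ)} (hBV : B ∈ V)
    (x0 L : ℝ) (y : ℕ → ℝ) (hP : ∀ n, (x0, y n) ∈ P)
    (hT : Filter.Tendsto y Filter.atTop (nhds L)) (hLB : (x0, L) ∈ B)
    (hNB : ∀ n, (x0, y n) ∉ B) : False := by
  have hg : ∀ n, ∃ F ∈ H, (x0, y n) ∈ F := fun n => hgood.mem_H_of_mem (hP n)
  have hT2 : Filter.Tendsto (fun n => ((x0 : ℝ), y n)) Filter.atTop (nhds (x0, L)) :=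
    (tendsto_const_nhds).prodMk_nhds hT
  obtain ⟨h, hhH, hzh, n, hnh⟩ := pigeonLimit hgood.finH
    (fun F hF => hgood.box F (Or.inl hF)) _ hg (x0, L) hT2
  have hne : (h ∩ B).Nonempty := ⟨(x0, L), hzh, hLB⟩
  have hcross := hgood.cross h hhH B hBV hne
  apply hNB n
  have : (x0, y n) ∈ (Prod.fst '' B) ×ˢ (Prod.snd '' h) :=
    ⟨⟨(x0, L), hLB, rfl⟩, ⟨(x0, y n), hnh, rfl⟩⟩
  rw [← hcross] at this
  exact this.2

end BoxFacts
section Disjoint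

variable {P : Set (ℝ × ℝ)} {H V : Set (Set (ℝ × ℝ))}

lemma tendstoAux (L δ : ℝ) :
    Filter.Tendsto (fun n : ℕ => L + δ / (n + 1)) Filter.atTop (nhds L) := by
  have h := tendsto_one_div_add_atTop_nhds_zero_nat.const_mul δ
  have he : (fun n : ℕ => L + δ / (n + 1)) = fun n : ℕ => L + δ * (1 / (n + 1)) :=
    funext fun n => by rw [mul_one_div]
  rw [he]
  simpa using tendsto_const_nhds.add h

lemma vtx_finite (hgood : GoodDecomp P H V) : Finite {B : Set (ℝ × ℝ) // B ∈ H ∪ V} :=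
  (hgood.finH.union hgood.finV).to_subtype

lemma oDiam_attained (hgood : GoodDecomp P H V) :
    (∃ i j : {B : Set (ℝ × ℝ) // B ∈ H ∪ V}, oDist H V i j = oDiamTheta H V) ∧
      (∀ i j : {B : Set (ℝ × ℝ) // B ∈ H ∪ V}, oDist H V i j ≤ oDiamTheta H V) := by
  have hfin := vtx_finite hgood
  have hne : Nonempty {B : Set (ℝ × ℝ) // B ∈ H ∪ V} := hgood.conn.nonempty
  obtain ⟨x⟩ := hne
  set S := {m : ℕ | ∃ i j : {B : Set (ℝ × ℝ) // B ∈ H ∪ V}, oDist H V i j = m} with hS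
  have hSne : S.Nonempty := ⟨oDist H V x x, x, x, rfl⟩
  have hSfin : S.Finite := by
    have : S = Set.range (fun p : {B : Set (ℝ × ℝ) // B ∈ H ∪ V} ×
        {B : Set (ℝ × ℝ) // B ∈ H ∪ V} => oDist H V p.1 p.2) := by
      ext m
      constructor
      · rintro ⟨i, j, rfl⟩; exact ⟨(i, j), rfl⟩
      · rintro ⟨⟨i, j⟩, rfl⟩; exact ⟨i, j, rfl⟩
    rw [this]
    exact Set.finite_range _
  have hbdd : BddAbove S := hSfin.bddAbove
  constructor
  · have := Nat.sSup_mem hSne hbdd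
    exact this
  · intro i j
    exact le_csSup hbdd ⟨i, j, rfl⟩

lemma fam_disjoint (hgood : GoodDecomp P H V) (hD : 4 ≤ oDiamTheta H V) :
    ∀ B, B ∈ H → B ∈ V → False := by
  intro B hBH hBV
  -- every member of H meeting B is contained in B
  have step1 : ∀ C ∈ H, (C ∩ B).Nonempty → C ⊆ B := by
    intro C hCH hne
    obtain ⟨a, b, c, d, hab, hcd, hB⟩ := hgood.box B (Or.inl hBH)
    obtain ⟨aC, bC, cC, dC, habC, hcdC, hC⟩ := hgood.box C (Or.inl hCH)
    have hcross := hgood.cross C hCH B hBV hne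
    have hf : Prod.fst '' B = Set.Icc a b := by
      rw [hB]; exact Set.fst_image_prod _ (Set.nonempty_Icc.2 hcd.le)
    have hs : Prod.snd '' C = Set.Icc cC dC := by
      rw [hC]; exact Set.snd_image_prod (Set.nonempty_Icc.2 habC.le) _
    rw [hf, hs] at hcross
    have hsub1 : Set.Icc a b ×ˢ Set.Icc cC dC ⊆ C := by
      rw [← hcross]; exact Set.inter_subset_left
    have hsub2 : Set.Icc a b ×ˢ Set.Icc cC dC ⊆ B := by
      rw [← hcross]; exact Set.inter_subset_right
    have hmemC : ∀ x y : ℝ, x ∈ Set.Icc a b → y ∈ Set.Icc cC dC → (x, y) ∈ C :=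
      fun x y hx hy => hsub1 ⟨hx, hy⟩
    have hmemB : ∀ x y : ℝ, x ∈ Set.Icc a b → y ∈ Set.Icc cC dC → (x, y) ∈ B :=
      fun x y hx hy => hsub2 ⟨hx, hy⟩
    have haI : a ∈ Set.Icc a b := ⟨le_refl a, hab.le⟩
    have hbI : b ∈ Set.Icc a b := ⟨hab.le, le_refl b⟩
    have hcCI : cC ∈ Set.Icc cC dC := ⟨le_refl cC, hcdC.le⟩
    have haC : aC ≤ a := by
      have := hmemC a cC haI hcCI
      rw [hC] at this; exact this.1.1
    have hbC : b ≤ bC := by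
      have := hmemC b cC hbI hcCI
      rw [hC] at this; exact this.1.2
    have hccC : c ≤ cC := by
      have := hmemB a cC haI hcCI
      rw [hB] at this; exact this.2.1
    have hdCd : dC ≤ d := by
      have := hmemB a dC haI ⟨hcdC.le, le_refl dC⟩
      rw [hB] at this; exact this.2.2
    -- now show C ⊆ B
    rw [hC, hB]
    rintro ⟨x, y⟩ ⟨hx, hy⟩
    have hyB : y ∈ Set.Icc c d := ⟨hccC.trans hy.1, hy.2.trans hdCd⟩
    refine ⟨⟨?_, ?_⟩, hyB⟩
    · -- a ≤ x
      by_contra hxa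
      push_neg at hxa
      refine escapeH hgood hBH y a (fun n => a - (a - x) / (n + 1)) ?_ ?_ ?_ ?_
      · intro n
        have h1 : (0:ℝ) < a - x := by linarith
        have h2 : (0:ℝ) < (n:ℝ) + 1 := by positivity
        have h3 : (a - x) / (n + 1) ≤ a - x := div_le_self h1.le (by
          have : (1:ℝ) ≤ (n:ℝ) + 1 := by
            have := Nat.cast_nonneg (α := ℝ) n; linarith
          exact this)
        have h4 : (0:ℝ) < (a - x) / (n + 1) := by positivity
        apply hgood.sub C (Or.inl hCH)
        rw [hC]
        constructor
        · constructor
          · have hxle : x ≤ a - (a - x) / (n + 1) := by linarith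
            exact hx.1.trans hxle
          · have : a - (a - x) / (n + 1) ≤ bC := by linarith [hab.le]
            exact this
        · exact hy
      · have ht := tendstoAux a (-(a - x))
        have he : (fun n : ℕ => a - (a - x) / (n + 1)) =
            fun n : ℕ => a + (-(a - x)) / (n + 1) := by
          funext n; rw [neg_div]; ring
        rw [he]; exact ht
      · rw [hB]; exact ⟨haI, hyB⟩
      · intro n mem
        rw [hB] at mem
        have h4 : (0:ℝ) < (a - x) / (n + 1) := by
          have h1 : (0:ℝ) < a - x := by linarith
          positivity
        have := mem.1.1
        linarith
    · -- x ≤ b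
      by_contra hxb
      push_neg at hxb
      refine escapeH hgood hBH y b (fun n => b + (x - b) / (n + 1)) ?_ ?_ ?_ ?_
      · intro n
        have h1 : (0:ℝ) < x - b := by linarith
        have h3 : (x - b) / (n + 1) ≤ x - b := div_le_self h1.le (by
          have := Nat.cast_nonneg (α := ℝ) n; linarith)
        have h4 : (0:ℝ) < (x - b) / (n + 1) := by positivity
        apply hgood.sub C (Or.inl hCH)
        rw [hC]
        refine ⟨⟨?_, ?_⟩, hy⟩
        · have : aC ≤ b := haC.trans hab.le
          linarith
        · have : b + (x - b) / (n + 1) ≤ x := by linarith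
          exact this.trans hx.2
      · exact tendstoAux b (x - b)
      · rw [hB]; exact ⟨hbI, hyB⟩
      · intro n mem
        rw [hB] at mem
        have h4 : (0:ℝ) < (x - b) / (n + 1) := by
          have h1 : (0:ℝ) < x - b := by linarith
          positivity
        have := mem.1.2
        linarith
  -- every member of V meeting B is contained in B
  have step1' : ∀ C ∈ V, (C ∩ B).Nonempty → C ⊆ B := by
    intro C hCV hne
    obtain ⟨a, b, c, d, hab, hcd, hB⟩ := hgood.box B (Or.inl hBH)
    obtain ⟨aC, bC, cC, dC, habC, hcdC, hC⟩ := hgood.box C (Or.inr hCV)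
    have hne' : (B ∩ C).Nonempty := by rwa [Set.inter_comm]
    have hcross := hgood.cross B hBH C hCV hne'
    have hf : Prod.fst '' C = Set.Icc aC bC := by
      rw [hC]; exact Set.fst_image_prod _ (Set.nonempty_Icc.2 hcdC.le)
    have hs : Prod.snd '' B = Set.Icc c d := by
      rw [hB]; exact Set.snd_image_prod (Set.nonempty_Icc.2 hab.le) _
    rw [hf, hs] at hcross
    have hsub1 : Set.Icc aC bC ×ˢ Set.Icc c d ⊆ C := by
      rw [← hcross]; exact Set.inter_subset_right
    have hsub2 : Set.Icc aC bC ×ˢ Set.Icc c d ⊆ B := by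
      rw [← hcross]; exact Set.inter_subset_left
    have haI : aC ∈ Set.Icc aC bC := ⟨le_refl aC, habC.le⟩
    have hcI : c ∈ Set.Icc c d := ⟨le_refl c, hcd.le⟩
    have haaC : a ≤ aC := by
      have := hsub2 (Set.mk_mem_prod haI hcI)
      rw [hB] at this; exact this.1.1
    have hbCb : bC ≤ b := by
      have := hsub2 (Set.mk_mem_prod (⟨habC.le, le_refl bC⟩ : bC ∈ Set.Icc aC bC) hcI)
      rw [hB] at this; exact this.1.2
    have hcCc : cC ≤ c := by
      have := hsub1 (Set.mk_mem_prod haI hcI)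
      rw [hC] at this; exact this.2.1
    have hddC : d ≤ dC := by
      have := hsub1 (Set.mk_mem_prod haI (⟨hcd.le, le_refl d⟩ : d ∈ Set.Icc c d))
      rw [hC] at this; exact this.2.2
    rw [hC, hB]
    rintro ⟨x, y⟩ ⟨hx, hy⟩
    have hxB : x ∈ Set.Icc a b := ⟨haaC.trans hx.1, hx.2.trans hbCb⟩
    refine ⟨hxB, ?_, ?_⟩
    · -- c ≤ y
      by_contra hyc
      push_neg at hyc
      refine escapeV hgood hBV x c (fun n => c - (c - y) / (n + 1)) ?_ ?_ ?_ ?_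
      · intro n
        have h1 : (0:ℝ) < c - y := by linarith
        have h3 : (c - y) / (n + 1) ≤ c - y := div_le_self h1.le (by
          have := Nat.cast_nonneg (α := ℝ) n; linarith)
        have h4 : (0:ℝ) < (c - y) / (n + 1) := by positivity
        apply hgood.sub C (Or.inr hCV)
        rw [hC]
        refine ⟨hx, ?_, ?_⟩
        · have hyle : y ≤ c - (c - y) / (n + 1) := by linarith
          exact hy.1.trans hyle
        · have : c - (c - y) / (n + 1) ≤ dC := by linarith [hcd.le]
          exact this
      · have ht := tendstoAux c (-(c - y))
        have he : (fun n : ℕ => c - (c - y) / (n + 1)) =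
            fun n : ℕ => c + (-(c - y)) / (n + 1) := by
          funext n; rw [neg_div]; ring
        rw [he]; exact ht
      · rw [hB]; exact ⟨hxB, hcI⟩
      · intro n mem
        rw [hB] at mem
        have h4 : (0:ℝ) < (c - y) / (n + 1) := by
          have h1 : (0:ℝ) < c - y := by linarith
          positivity
        have := mem.2.1
        linarith
    · -- y ≤ d
      by_contra hyd
      push_neg at hyd
      refine escapeV hgood hBV x d (fun n => d + (y - d) / (n + 1)) ?_ ?_ ?_ ?_
      · intro n
        have h1 : (0:ℝ) < y - d := by linarith
        have h3 : (y - d) / (n + 1) ≤ y - d := div_le_self h1.le (by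
          have := Nat.cast_nonneg (α := ℝ) n; linarith)
        have h4 : (0:ℝ) < (y - d) / (n + 1) := by positivity
        apply hgood.sub C (Or.inr hCV)
        rw [hC]
        refine ⟨hx, ?_, ?_⟩
        · have : cC ≤ d := hcCc.trans hcd.le
          linarith
        · have : d + (y - d) / (n + 1) ≤ y := by linarith
          exact this.trans hy.2
      · exact tendstoAux d (y - d)
      · rw [hB]; exact ⟨hxB, hcd.le, le_refl d⟩
      · intro n mem
        rw [hB] at mem
        have h4 : (0:ℝ) < (y - d) / (n + 1) := by
          have h1 : (0:ℝ) < y - d := by linarith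
          positivity
        have := mem.2.2
        linarith
  -- every box is contained in B
  set bv : {B : Set (ℝ × ℝ) // B ∈ H ∪ V} := ⟨B, Or.inl hBH⟩ with hbv
  have key : ∀ (u e : {B : Set (ℝ × ℝ) // B ∈ H ∪ V}) (w : (thetaGraph H V).Walk u e),
      e.1 ⊆ B → u.1 ⊆ B := by
    intro u e w
    induction w with
    | nil => exact fun h => h
    | @cons u' v' e' hadj tail ih =>
      intro he
      obtain ⟨z, hzu, hzv⟩ := hadj.2.2
      have hne : (u'.1 ∩ B).Nonempty := ⟨z, hzu, ih he hzv⟩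
      rcases u'.2 with hu | hu
      · exact step1 u'.1 hu hne
      · exact step1' u'.1 hu hne
  have hall : ∀ X : {B : Set (ℝ × ℝ) // B ∈ H ∪ V}, X.1 ⊆ B := by
    intro X
    obtain ⟨w⟩ := hgood.conn.preconnected X bv
    exact key X bv w subset_rfl
  have hd1 : ∀ X : {B : Set (ℝ × ℝ) // B ∈ H ∪ V}, (thetaGraph H V).dist X bv ≤ 1 := by
    intro X
    by_cases hX : X = bv
    · subst hX; simp [SimpleGraph.dist_self]
    · have hadj : (thetaGraph H V).Adj X bv := by
        refine ⟨hX, ?_, ?_⟩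
        · rcases X.2 with hXH | hXV
          · exact Or.inl ⟨hXH, hBV⟩
          · exact Or.inr ⟨hXV, hBH⟩
        · obtain ⟨z, hz⟩ := (hgood.box X.1 X.2).nonempty
          exact ⟨z, hz, hall X hz⟩
      exact le_of_eq (SimpleGraph.dist_eq_one_iff_adj.2 hadj)
  have hd2 : ∀ X Y : {B : Set (ℝ × ℝ) // B ∈ H ∪ V}, (thetaGraph H V).dist X Y ≤ 2 := by
    intro X Y
    calc (thetaGraph H V).dist X Y ≤ (thetaGraph H V).dist X bv + (thetaGraph H V).dist bv Y :=
          hgood.conn.dist_triangle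
      _ ≤ 1 + 1 := by
          have h1 := hd1 X
          have h2 := hd1 Y
          rw [SimpleGraph.dist_comm] at h2
          omega
      _ = 2 := rfl
  obtain ⟨⟨i, j, hij⟩, -⟩ := oDiam_attained hgood
  have : oDist H V i j ≤ 3 := by
    unfold oDist
    have := hd2 i j
    omega
  omega

end Disjoint
section Parity

variable {P : Set (ℝ × ℝ)} {H V : Set (Set (ℝ × ℝ))}

lemma adj_sides (hdisj : ∀ B, B ∈ H → B ∈ V → False)
    {x y : {B : Set (ℝ × ℝ) // B ∈ H ∪ V}} (h : (thetaGraph H V).Adj x y) :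
    (x.1 ∈ H ↔ ¬ (y.1 ∈ H)) := by
  rcases h.2.1 with ⟨hxH, hyV⟩ | ⟨hxV, hyH⟩
  · exact ⟨fun _ hyH => hdisj _ hyH hyV, fun _ => hxH⟩
  · exact ⟨fun hxH => (hdisj _ hxH hxV).elim, fun hny => (hny hyH).elim⟩

lemma walk_parity (hdisj : ∀ B, B ∈ H → B ∈ V → False)
    {x y : {B : Set (ℝ × ℝ) // B ∈ H ∪ V}} (w : (thetaGraph H V).Walk x y) :
    (Even w.length ↔ (x.1 ∈ H ↔ y.1 ∈ H)) := by
  induction w with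
  | nil => simp
  | @cons u v e hadj tail ih =>
    rw [SimpleGraph.Walk.length_cons, Nat.even_add_one, ih]
    have hs := adj_sides hdisj hadj
    tauto

lemma dist_parity (hgood : GoodDecomp P H V) (hdisj : ∀ B, B ∈ H → B ∈ V → False)
    (x y : {B : Set (ℝ × ℝ) // B ∈ H ∪ V}) :
    (Even ((thetaGraph H V).dist x y) ↔ (x.1 ∈ H ↔ y.1 ∈ H)) := by
  obtain ⟨w, hw⟩ := hgood.conn.exists_walk_length_eq_dist x y
  rw [← hw]
  exact walk_parity hdisj w

end Parity

section Construct

variable {P : Set (ℝ × ℝ)} {H V : Set (Set (ℝ × ℝ))}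

lemma rectPath_prepend {p p1 q : ℝ × ℝ} {k : ℕ} {f : ℕ → ℝ × ℝ}
    (hf : IsRectPath P p1 q k f) (hseg : segment ℝ p p1 ⊆ P) (hax : AxisParallel p p1) :
    IsRectPath P p q (k + 1) (fun t => if t = 0 then p else f (t - 1)) := by
  obtain ⟨hk, h0, hk', hlinks⟩ := hf
  refine ⟨Nat.le_add_left 1 k, by simp, by simp [hk'], ?_⟩
  intro t ht
  rcases Nat.eq_zero_or_pos t with rfl | htpos
  · simpa [h0] using ⟨hseg, hax⟩
  · obtain ⟨s, rfl⟩ := Nat.exists_eq_add_of_le htpos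
    have hs : s < k := by omega
    have e1 : (fun t => if t = 0 then p else f (t - 1)) (1 + s) = f s := by
      have : 1 + s ≠ 0 := by omega
      simp only [this, if_false]
      congr 1
      omega
    have e2 : (fun t => if t = 0 then p else f (t - 1)) (1 + s + 1) = f (s + 1) := by
      have : 1 + s + 1 ≠ 0 := by omega
      simp only [this, if_false]
      congr 1
      omega
    rw [e1, e2]
    exact hlinks s hs

lemma same_box_path (hgood : GoodDecomp P H V) {B : Set (ℝ × ℝ)} (hB : B ∈ H ∪ V)
    {p q : ℝ × ℝ} (hp : p ∈ B) (hq : q ∈ B) :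
    ∃ f, IsRectPath P p q 2 f := by
  obtain ⟨a, b, c, d, hab, hcd, hBe⟩ := hgood.box B hB
  have hmid : (q.1, p.2) ∈ B := by
    rw [hBe] at hp hq ⊢
    exact ⟨hq.1, hp.2⟩
  have hconv : Convex ℝ B := (hgood.box B hB).convex
  have hsub : B ⊆ P := hgood.sub B hB
  refine ⟨fun t => if t = 0 then p else if t = 1 then (q.1, p.2) else q, ?_, rfl, rfl, ?_⟩
  · omega
  intro t ht
  interval_cases t
  · refine ⟨(hconv.segment_subset hp hmid).trans hsub, Or.inl rfl⟩
  · refine ⟨(hconv.segment_subset hmid hq).trans hsub, Or.inr rfl⟩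

lemma adj_path (hgood : GoodDecomp P H V) {x y : {B : Set (ℝ × ℝ) // B ∈ H ∪ V}}
    (hadj : (thetaGraph H V).Adj x y) {p q : ℝ × ℝ} (hp : p ∈ x.1) (hq : q ∈ y.1) :
    ∃ f, IsRectPath P p q 2 f := by
  have hconvx : Convex ℝ x.1 := (hgood.box x.1 x.2).convex
  have hconvy : Convex ℝ y.1 := (hgood.box y.1 y.2).convex
  have hsubx : x.1 ⊆ P := hgood.sub x.1 x.2
  have hsuby : y.1 ⊆ P := hgood.sub y.1 y.2
  rcases hadj.2.1 with ⟨hxH, hyV⟩ | ⟨hxV, hyH⟩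
  · have hcross := hgood.cross x.1 hxH y.1 hyV hadj.2.2
    have hmid : (q.1, p.2) ∈ x.1 ∩ y.1 := by
      rw [hcross]
      exact ⟨⟨q, hq, rfl⟩, ⟨p, hp, rfl⟩⟩
    refine ⟨fun t => if t = 0 then p else if t = 1 then (q.1, p.2) else q, by omega, rfl, rfl, ?_⟩
    intro t ht
    interval_cases t
    · exact ⟨(hconvx.segment_subset hp hmid.1).trans hsubx, Or.inl rfl⟩
    · exact ⟨(hconvy.segment_subset hmid.2 hq).trans hsuby, Or.inr rfl⟩
  · have hne : (y.1 ∩ x.1).Nonempty := by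
      obtain ⟨z, hz1, hz2⟩ := hadj.2.2
      exact ⟨z, hz2, hz1⟩
    have hcross := hgood.cross y.1 hyH x.1 hxV hne
    have hmid : (p.1, q.2) ∈ y.1 ∩ x.1 := by
      rw [hcross]
      exact ⟨⟨p, hp, rfl⟩, ⟨q, hq, rfl⟩⟩
    refine ⟨fun t => if t = 0 then p else if t = 1 then (p.1, q.2) else q, by omega, rfl, rfl, ?_⟩
    intro t ht
    interval_cases t
    · exact ⟨(hconvx.segment_subset hp hmid.2).trans hsubx, Or.inr rfl⟩
    · exact ⟨(hconvy.segment_subset hmid.1 hq).trans hsuby, Or.inl rfl⟩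

lemma walk_path (hgood : GoodDecomp P H V) :
    ∀ {x y : {B : Set (ℝ × ℝ) // B ∈ H ∪ V}} (w : (thetaGraph H V).Walk x y),
      1 ≤ w.length → ∀ p ∈ x.1, ∀ q ∈ y.1, ∃ f, IsRectPath P p q (w.length + 1) f := by
  intro x y w
  induction w with
  | nil => intro h; simp at h
  | @cons u v e hadj tail ih =>
    intro _ p hp q hq
    rcases Nat.eq_zero_or_pos tail.length with h0 | hpos
    · have hve : v = e := tail.eq_of_length_eq_zero h0
      subst hve
      obtain ⟨f, hf⟩ := adj_path hgood hadj hp hq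
      refine ⟨f, ?_⟩
      rw [SimpleGraph.Walk.length_cons, h0]
      exact hf
    · -- build the first link into u ∩ v
      have hconvu : Convex ℝ u.1 := (hgood.box u.1 u.2).convex
      have hsubu : u.1 ⊆ P := hgood.sub u.1 u.2
      obtain ⟨w0, hw0⟩ := (hgood.box v.1 v.2).nonempty
      have hmid : ∃ p1 : ℝ × ℝ, p1 ∈ u.1 ∩ v.1 ∧ AxisParallel p p1 := by
        rcases hadj.2.1 with ⟨huH, hvV⟩ | ⟨huV, hvH⟩
        · have hcross := hgood.cross u.1 huH v.1 hvV hadj.2.2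
          refine ⟨(w0.1, p.2), ?_, Or.inl rfl⟩
          rw [hcross]
          exact ⟨⟨w0, hw0, rfl⟩, ⟨p, hp, rfl⟩⟩
        · have hne : (v.1 ∩ u.1).Nonempty := by
            obtain ⟨z, hz1, hz2⟩ := hadj.2.2
            exact ⟨z, hz2, hz1⟩
          have hcross := hgood.cross v.1 hvH u.1 huV hne
          refine ⟨(p.1, w0.2), ?_, Or.inr rfl⟩
          have : (p.1, w0.2) ∈ v.1 ∩ u.1 := by
            rw [hcross]
            exact ⟨⟨p, hp, rfl⟩, ⟨w0, hw0, rfl⟩⟩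
          exact ⟨this.2, this.1⟩
      obtain ⟨p1, ⟨hp1u, hp1v⟩, hax⟩ := hmid
      obtain ⟨f, hf⟩ := ih hpos p1 hp1v q hq
      have hpre := rectPath_prepend hf ((hconvu.segment_subset hp hp1u).trans hsubu) hax
      have hlen : (SimpleGraph.Walk.cons hadj tail).length + 1 = tail.length + 1 + 1 := by
        rw [SimpleGraph.Walk.length_cons]
      exact ⟨_, hlen ▸ hpre⟩

lemma rld_le_of_dist (hgood : GoodDecomp P H V) {x y : {B : Set (ℝ × ℝ) // B ∈ H ∪ V}}
    {p q : ℝ × ℝ} (hp : p ∈ x.1) (hq : q ∈ y.1) {K : ℕ}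
    (hK1 : (thetaGraph H V).dist x y + 1 ≤ K) (hK2 : 2 ≤ K) :
    rld P p q ≤ K := by
  by_cases hxy : x = y
  · subst hxy
    obtain ⟨f, hf⟩ := same_box_path hgood x.2 hp hq
    have hmem : 2 ∈ {k : ℕ | ∃ f : ℕ → ℝ × ℝ, IsRectPath P p q k f} := ⟨f, hf⟩
    exact (Nat.sInf_le hmem).trans hK2
  · have hpos := hgood.conn.pos_dist_of_ne hxy
    obtain ⟨w, hw⟩ := hgood.conn.exists_walk_length_eq_dist x y
    have h1 : 1 ≤ w.length := by omega
    obtain ⟨f, hf⟩ := walk_path hgood w h1 p hp q hq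
    have hmem : w.length + 1 ∈ {k : ℕ | ∃ f : ℕ → ℝ × ℝ, IsRectPath P p q k f} := ⟨f, hf⟩
    have := Nat.sInf_le hmem
    rw [hw] at this
    exact this.trans hK1

lemma pathset_nonempty (hgood : GoodDecomp P H V) {p q : ℝ × ℝ} (hp : p ∈ P) (hq : q ∈ P) :
    {k : ℕ | ∃ f : ℕ → ℝ × ℝ, IsRectPath P p q k f}.Nonempty := by
  obtain ⟨h1, hH1, hp1⟩ := hgood.mem_H_of_mem hp
  obtain ⟨h2, hH2, hp2⟩ := hgood.mem_H_of_mem hq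
  set x : {B : Set (ℝ × ℝ) // B ∈ H ∪ V} := ⟨h1, Or.inl hH1⟩
  set y : {B : Set (ℝ × ℝ) // B ∈ H ∪ V} := ⟨h2, Or.inl hH2⟩
  by_cases hxy : x = y
  · obtain ⟨f, hf⟩ := same_box_path hgood x.2 hp1 (by
      show q ∈ x.1
      rw [hxy]
      exact hp2)
    exact ⟨2, f, hf⟩
  · have hpos := hgood.conn.pos_dist_of_ne hxy
    obtain ⟨w, hw⟩ := hgood.conn.exists_walk_length_eq_dist x y
    have h1 : 1 ≤ w.length := by omega
    obtain ⟨f, hf⟩ := walk_path hgood w h1 p hp1 q hp2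
    exact ⟨w.length + 1, f, hf⟩

end Construct
section Lower

variable {P : Set (ℝ × ℝ)} {H V : Set (Set (ℝ × ℝ))}

lemma lower_main (hgood : GoodDecomp P H V) (hdisj : ∀ B, B ∈ H → B ∈ V → False) :
    ∀ k : ℕ, ∀ (f : ℕ → ℝ × ℝ) (p q : ℝ × ℝ), IsRectPath P p q k f →
      (((f 0).2 = (f 1).2) → ∃ i j : {B : Set (ℝ × ℝ) // B ∈ H ∪ V},
        i.1 ∈ H ∧ p ∈ i.1 ∧ q ∈ j.1 ∧ (thetaGraph H V).dist i j ≤ k - 1) ∧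
      (((f 0).1 = (f 1).1) → ∃ i j : {B : Set (ℝ × ℝ) // B ∈ H ∪ V},
        i.1 ∈ V ∧ p ∈ i.1 ∧ q ∈ j.1 ∧ (thetaGraph H V).dist i j ≤ k - 1) := by
  intro k
  induction k using Nat.strong_induction_on with
  | _ k IH =>
    intro f p q hpath
    obtain ⟨hk1, h0, hke, hlinks⟩ := hpath
    rcases eq_or_lt_of_le hk1 with hk | hk2
    · -- k = 1
      have hk' : k = 1 := hk.symm
      subst hk'
      constructor
      · intro hor
        obtain ⟨h, hH, hsub⟩ := hgood.covH (f 0) (f 1) hor (hlinks 0 (by omega)).1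
        refine ⟨⟨h, Or.inl hH⟩, ⟨h, Or.inl hH⟩, hH, ?_, ?_, by simp [SimpleGraph.dist_self]⟩
        · rw [← h0]; exact hsub (left_mem_segment ℝ _ _)
        · rw [← hke]; exact hsub (right_mem_segment ℝ _ _)
      · intro hver
        obtain ⟨v, hV, hsub⟩ := hgood.covV (f 0) (f 1) hver (hlinks 0 (by omega)).1
        refine ⟨⟨v, Or.inr hV⟩, ⟨v, Or.inr hV⟩, hV, ?_, ?_, by simp [SimpleGraph.dist_self]⟩
        · rw [← h0]; exact hsub (left_mem_segment ℝ _ _)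
        · rw [← hke]; exact hsub (right_mem_segment ℝ _ _)
    · -- k ≥ 2
      have hk2' : 2 ≤ k := hk2
      have hlink2 := hlinks 1 (by omega)
      constructor
      · -- horizontal first link
        intro hor
        rcases eq_or_ne ((f 1).2) ((f 2).2) with hA | hB
        · -- merge the first two (collinear horizontal) links
          set g : ℕ → ℝ × ℝ := fun t => if t = 0 then f 0 else f (t + 1) with hg
          have hgpath : IsRectPath P p q (k - 1) g := by
            refine ⟨by omega, by simpa [hg] using h0, ?_, ?_⟩
            · have hne : k - 1 ≠ 0 := by omega
              simp only [hg, hne, if_false]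
              rw [(by omega : k - 1 + 1 = k)]
              exact hke
            · intro t ht
              rcases Nat.eq_zero_or_pos t with rfl | htpos
              · have e1 : g 0 = f 0 := by simp [hg]
                have e2 : g 1 = f 2 := by simp [hg]
                rw [e1, e2]
                constructor
                · intro z hz
                  rcases seg_merge_h hor hA hz with h | h
                  · exact (hlinks 0 (by omega)).1 h
                  · exact (hlinks 1 (by omega)).1 h
                · exact Or.inl (hor.trans hA)
              · have e1 : g t = f (t + 1) := by simp [hg, Nat.pos_iff_ne_zero.1 htpos]
                have e2 : g (t + 1) = f (t + 2) := by simp [hg]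
                rw [e1, e2]
                exact hlinks (t + 1) (by omega)
          have hg01 : (g 0).2 = (g 1).2 := by
            have e1 : g 0 = f 0 := by simp [hg]
            have e2 : g 1 = f 2 := by simp [hg]
            rw [e1, e2]
            exact hor.trans hA
          obtain ⟨i, j, hiH, hpi, hqj, hd⟩ := ((IH (k - 1) (by omega) g p q hgpath).1) hg01
          exact ⟨i, j, hiH, hpi, hqj, by omega⟩
        · -- first link horizontal, second strictly vertical
          have hver2 : (f 1).1 = (f 2).1 := by
            rcases hlink2.2 with h | h
            · exact absurd h hB
            · exact h
          obtain ⟨h, hH, hsub⟩ := hgood.covH (f 0) (f 1) hor (hlinks 0 (by omega)).1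
          set g : ℕ → ℝ × ℝ := fun t => f (t + 1) with hg
          have hgpath : IsRectPath P (f 1) q (k - 1) g := by
            refine ⟨by omega, rfl, ?_, ?_⟩
            · show f (k - 1 + 1) = q
              rw [(by omega : k - 1 + 1 = k)]
              exact hke
            · intro t ht
              exact hlinks (t + 1) (by omega)
          have hg01 : (g 0).1 = (g 1).1 := hver2
          obtain ⟨i', j, hi'V, hfi', hqj, hd⟩ := ((IH (k - 1) (by omega) g (f 1) q hgpath).2) hg01
          set i : {B : Set (ℝ × ℝ) // B ∈ H ∪ V} := ⟨h, Or.inl hH⟩ with hi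
          have hne : i ≠ i' := by
            intro heq
            apply hdisj h hH
            have : i.1 = i'.1 := by rw [heq]
            rw [← this] at hi'V
            exact hi'V
          have hadj : (thetaGraph H V).Adj i i' :=
            ⟨hne, Or.inl ⟨hH, hi'V⟩, ⟨f 1, hsub (right_mem_segment ℝ _ _), hfi'⟩⟩
          refine ⟨i, j, hH, ?_, hqj, ?_⟩
          · rw [← h0]; exact hsub (left_mem_segment ℝ _ _)
          · have htri := hgood.conn.dist_triangle (u := i) (v := i') (w := j)
            have h1 : (thetaGraph H V).dist i i' = 1 := SimpleGraph.dist_eq_one_iff_adj.2 hadj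
            omega
      · -- vertical first link
        intro hver
        rcases eq_or_ne ((f 1).1) ((f 2).1) with hA | hB
        · set g : ℕ → ℝ × ℝ := fun t => if t = 0 then f 0 else f (t + 1) with hg
          have hgpath : IsRectPath P p q (k - 1) g := by
            refine ⟨by omega, by simpa [hg] using h0, ?_, ?_⟩
            · have hne : k - 1 ≠ 0 := by omega
              simp only [hg, hne, if_false]
              rw [(by omega : k - 1 + 1 = k)]
              exact hke
            · intro t ht
              rcases Nat.eq_zero_or_pos t with rfl | htpos
              · have e1 : g 0 = f 0 := by simp [hg]
                have e2 : g 1 = f 2 := by simp [hg]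
                rw [e1, e2]
                constructor
                · intro z hz
                  rcases seg_merge_v hver hA hz with h | h
                  · exact (hlinks 0 (by omega)).1 h
                  · exact (hlinks 1 (by omega)).1 h
                · exact Or.inr (hver.trans hA)
              · have e1 : g t = f (t + 1) := by simp [hg, Nat.pos_iff_ne_zero.1 htpos]
                have e2 : g (t + 1) = f (t + 2) := by simp [hg]
                rw [e1, e2]
                exact hlinks (t + 1) (by omega)
          have hg01 : (g 0).1 = (g 1).1 := by
            have e1 : g 0 = f 0 := by simp [hg]
            have e2 : g 1 = f 2 := by simp [hg]
            rw [e1, e2]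
            exact hver.trans hA
          obtain ⟨i, j, hiV, hpi, hqj, hd⟩ := ((IH (k - 1) (by omega) g p q hgpath).2) hg01
          exact ⟨i, j, hiV, hpi, hqj, by omega⟩
        · have hhor2 : (f 1).2 = (f 2).2 := by
            rcases hlink2.2 with h | h
            · exact h
            · exact absurd h hB
          obtain ⟨v, hV, hsub⟩ := hgood.covV (f 0) (f 1) hver (hlinks 0 (by omega)).1
          set g : ℕ → ℝ × ℝ := fun t => f (t + 1) with hg
          have hgpath : IsRectPath P (f 1) q (k - 1) g := by
            refine ⟨by omega, rfl, ?_, ?_⟩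
            · show f (k - 1 + 1) = q
              rw [(by omega : k - 1 + 1 = k)]
              exact hke
            · intro t ht
              exact hlinks (t + 1) (by omega)
          have hg01 : (g 0).2 = (g 1).2 := hhor2
          obtain ⟨i', j, hi'H, hfi', hqj, hd⟩ := ((IH (k - 1) (by omega) g (f 1) q hgpath).1) hg01
          set i : {B : Set (ℝ × ℝ) // B ∈ H ∪ V} := ⟨v, Or.inr hV⟩ with hi
          have hne : i ≠ i' := by
            intro heq
            apply hdisj v
            · have : i.1 = i'.1 := by rw [heq]
              rw [← this] at hi'H
              exact hi'H
            · exact hV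
          have hadj : (thetaGraph H V).Adj i i' :=
            ⟨hne, Or.inr ⟨hV, hi'H⟩, ⟨f 1, hsub (right_mem_segment ℝ _ _), hfi'⟩⟩
          refine ⟨i, j, hV, ?_, hqj, ?_⟩
          · rw [← h0]; exact hsub (left_mem_segment ℝ _ _)
          · have htri := hgood.conn.dist_triangle (u := i) (v := i') (w := j)
            have h1 : (thetaGraph H V).dist i i' = 1 := SimpleGraph.dist_eq_one_iff_adj.2 hadj
            omega

lemma lower_bound (hgood : GoodDecomp P H V) (hdisj : ∀ B, B ∈ H → B ∈ V → False)
    {p q : ℝ × ℝ} {k : ℕ} {f : ℕ → ℝ × ℝ} (hpath : IsRectPath P p q k f) :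
    ∃ i j : {B : Set (ℝ × ℝ) // B ∈ H ∪ V},
      p ∈ i.1 ∧ q ∈ j.1 ∧ (thetaGraph H V).dist i j ≤ k - 1 := by
  have hmain := lower_main hgood hdisj k f p q hpath
  have hk1 : 1 ≤ k := hpath.1
  rcases (hpath.2.2.2 0 (by omega : 0 < k)).2 with hor | hver
  · obtain ⟨i, j, -, hpi, hqj, hd⟩ := hmain.1 hor
    exact ⟨i, j, hpi, hqj, hd⟩
  · obtain ⟨i, j, -, hpi, hqj, hd⟩ := hmain.2 hver
    exact ⟨i, j, hpi, hqj, hd⟩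

lemma rld_ge (hgood : GoodDecomp P H V) (hdisj : ∀ B, B ∈ H → B ∈ V → False)
    {p q : ℝ × ℝ} (hp : p ∈ P) (hq : q ∈ P) {m : ℕ}
    (hbound : ∀ i j : {B : Set (ℝ × ℝ) // B ∈ H ∪ V},
      p ∈ i.1 → q ∈ j.1 → m ≤ (thetaGraph H V).dist i j) :
    m + 1 ≤ rld P p q := by
  have hne := pathset_nonempty hgood hp hq
  have hmem : rld P p q ∈ {k : ℕ | ∃ f : ℕ → ℝ × ℝ, IsRectPath P p q k f} :=
    Nat.sInf_mem hne
  obtain ⟨f, hf⟩ := hmem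
  obtain ⟨i, j, hpi, hqj, hd⟩ := lower_bound hgood hdisj hf
  have h1 := hbound i j hpi hqj
  have h2 : 1 ≤ rld P p q := hf.1
  omega

end Lower
section Assembly

variable {P : Set (ℝ × ℝ)} {H V : Set (Set (ℝ × ℝ))}

lemma generic_point (hgood : GoodDecomp P H V)
    (hgen : ∀ h ∈ H, ∀ v ∈ V, (h ∩ v).Nonempty →
      ∃ x ∈ h ∩ v, ∀ B ∈ H ∪ V, x ∈ B → B = h ∨ B = v)
    {x y : {B : Set (ℝ × ℝ) // B ∈ H ∪ V}} (hadj : (thetaGraph H V).Adj x y) :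
    ∃ p, p ∈ x.1 ∧ p ∈ y.1 ∧
      ∀ B : {B : Set (ℝ × ℝ) // B ∈ H ∪ V}, p ∈ B.1 → B = x ∨ B = y := by
  rcases hadj.2.1 with ⟨hxH, hyV⟩ | ⟨hxV, hyH⟩
  · obtain ⟨z, hz, honly⟩ := hgen x.1 hxH y.1 hyV hadj.2.2
    refine ⟨z, hz.1, hz.2, fun B hB => ?_⟩
    rcases honly B.1 B.2 hB with h | h
    · exact Or.inl (Subtype.ext h)
    · exact Or.inr (Subtype.ext h)
  · have hne : (y.1 ∩ x.1).Nonempty := by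
      obtain ⟨z, hz1, hz2⟩ := hadj.2.2
      exact ⟨z, hz2, hz1⟩
    obtain ⟨z, hz, honly⟩ := hgen y.1 hyH x.1 hxV hne
    refine ⟨z, hz.2, hz.1, fun B hB => ?_⟩
    rcases honly B.1 B.2 hB with h | h
    · exact Or.inr (Subtype.ext h)
    · exact Or.inl (Subtype.ext h)

lemma head_adj {H V : Set (Set (ℝ × ℝ))} :
    ∀ {u v : {B : Set (ℝ × ℝ) // B ∈ H ∪ V}} (w : (thetaGraph H V).Walk u v),
      1 ≤ w.length → ∃ u', (thetaGraph H V).Adj u u' := by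
  intro u v w
  cases w with
  | nil => intro h; simp at h
  | cons hadj tail => intro _; exact ⟨_, hadj⟩

theorem rldDiam_dichotomy' (P : Set (ℝ × ℝ)) (H V : Set (Set (ℝ × ℝ)))
    (hgood : GoodDecomp P H V)
    (hgen : ∀ h ∈ H, ∀ v ∈ V, (h ∩ v).Nonempty →
      ∃ x ∈ h ∩ v, ∀ B ∈ H ∪ V, x ∈ B → B = h ∨ B = v)
    (hD : 4 ≤ oDiamTheta H V) :
    ((∃ i i' j j' : {B : Set (ℝ × ℝ) // B ∈ H ∪ V},
        (thetaGraph H V).Adj i i' ∧ (thetaGraph H V).Adj j j' ∧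
          oDist H V i j = oDiamTheta H V ∧ oDist H V i' j' = oDiamTheta H V) →
      rldDiam P = oDiamTheta H V - 1) ∧
    ((¬ ∃ i i' j j' : {B : Set (ℝ × ℝ) // B ∈ H ∪ V},
        (thetaGraph H V).Adj i i' ∧ (thetaGraph H V).Adj j j' ∧
          oDist H V i j = oDiamTheta H V ∧ oDist H V i' j' = oDiamTheta H V) →
      rldDiam P = oDiamTheta H V - 2) := by
  have hdisj : ∀ B, B ∈ H → B ∈ V → False := fam_disjoint hgood hD
  obtain ⟨⟨σ0, τ0, hσ0τ0⟩, hub⟩ := oDiam_attained hgood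
  set D := oDiamTheta H V with hDdef
  have hdb : ∀ i j : {B : Set (ℝ × ℝ) // B ∈ H ∪ V},
      (thetaGraph H V).dist i j ≤ D - 1 := by
    intro i j
    have := hub i j
    unfold oDist at this
    omega
  -- general upper bound : rld ≤ D - 1
  have upper1 : ∀ p ∈ P, ∀ q ∈ P, rld P p q ≤ D - 1 := by
    intro p hp q hq
    obtain ⟨hp1, hH1, hmp1⟩ := hgood.mem_H_of_mem hp
    obtain ⟨hq1, hHq, hmq1⟩ := hgood.mem_H_of_mem hq
    obtain ⟨vq, hVq, hmq2⟩ := hgood.mem_V_of_mem hq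
    set x : {B : Set (ℝ × ℝ) // B ∈ H ∪ V} := ⟨hp1, Or.inl hH1⟩
    set y : {B : Set (ℝ × ℝ) // B ∈ H ∪ V} := ⟨hq1, Or.inl hHq⟩
    set y' : {B : Set (ℝ × ℝ) // B ∈ H ∪ V} := ⟨vq, Or.inr hVq⟩
    by_cases hcase : (thetaGraph H V).dist x y + 1 ≤ D - 1
    · exact rld_le_of_dist hgood hmp1 hmq1 hcase (by omega)
    · have h1 : (thetaGraph H V).dist x y = D - 1 := by
        have := hdb x y; omega
      have hev1 : Even ((thetaGraph H V).dist x y) :=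
        (dist_parity hgood hdisj x y).2 ⟨fun _ => hHq, fun _ => hH1⟩
      have hev2 : ¬ Even ((thetaGraph H V).dist x y') := by
        intro hev
        have := (dist_parity hgood hdisj x y').1 hev
        exact hdisj vq (this.1 hH1) hVq
      have h2 : (thetaGraph H V).dist x y' ≤ D - 1 := hdb x y'
      have hne12 : (thetaGraph H V).dist x y' ≠ D - 1 := by
        intro heq
        rw [← h1] at heq
        rw [heq] at hev2
        exact hev2 hev1
      exact rld_le_of_dist hgood (x := x) (y := y') hmp1 hmq2 (by omega) (by omega)
  constructor
  · -- case 1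
    rintro ⟨i, i', j, j', hii', hjj', hOij, hOij'⟩
    have dij : (thetaGraph H V).dist i j = D - 1 := by
      unfold oDist at hOij; omega
    have dij' : (thetaGraph H V).dist i' j' = D - 1 := by
      unfold oDist at hOij'; omega
    obtain ⟨p, hpi, hpi', hponly⟩ := generic_point hgood hgen hii'
    obtain ⟨q, hqj, hqj', hqonly⟩ := generic_point hgood hgen hjj'
    have hpP : p ∈ P := hgood.sub i.1 i.2 hpi
    have hqP : q ∈ P := hgood.sub j.1 j.2 hqj
    have d1 : (thetaGraph H V).dist i i' = 1 := SimpleGraph.dist_eq_one_iff_adj.2 hii'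
    have d2 : (thetaGraph H V).dist j j' = 1 := SimpleGraph.dist_eq_one_iff_adj.2 hjj'
    have e2 : D - 2 ≤ (thetaGraph H V).dist i j' := by
      have htri := hgood.conn.dist_triangle (u := i) (v := j') (w := j)
      have h2' : (thetaGraph H V).dist j' j = 1 := by
        rw [SimpleGraph.dist_comm]; exact d2
      omega
    have e3 : D - 2 ≤ (thetaGraph H V).dist i' j := by
      have htri := hgood.conn.dist_triangle (u := i) (v := i') (w := j)
      omega
    have hlow : D - 1 ≤ rld P p q := by
      have := rld_ge hgood hdisj hpP hqP (m := D - 2) ?_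
      · omega
      intro a b hpa hqb
      rcases hponly a hpa with ha | ha <;> rcases hqonly b hqb with hb | hb <;>
        rw [ha, hb]
      · omega
      · exact e2
      · exact e3
      · omega
    have heq : rld P p q = D - 1 := le_antisymm (upper1 p hpP q hqP) hlow
    refine IsGreatest.csSup_eq ⟨⟨p, hpP, q, hqP, heq⟩, ?_⟩
    rintro m ⟨p', hp', q', hq', rfl⟩
    exact upper1 p' hp' q' hq'
  · -- case 2
    intro hnw
    -- upper bound D - 2 for all pairs
    have upper2 : ∀ p ∈ P, ∀ q ∈ P, rld P p q ≤ D - 2 := by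
      intro p hp q hq
      obtain ⟨hp1, hH1, hmp1⟩ := hgood.mem_H_of_mem hp
      obtain ⟨vp, hVp, hmp2⟩ := hgood.mem_V_of_mem hp
      obtain ⟨hq1, hHq, hmq1⟩ := hgood.mem_H_of_mem hq
      obtain ⟨vq, hVq, hmq2⟩ := hgood.mem_V_of_mem hq
      set x : {B : Set (ℝ × ℝ) // B ∈ H ∪ V} := ⟨hp1, Or.inl hH1⟩ with hxdef
      set x' : {B : Set (ℝ × ℝ) // B ∈ H ∪ V} := ⟨vp, Or.inr hVp⟩ with hx'def
      set y : {B : Set (ℝ × ℝ) // B ∈ H ∪ V} := ⟨hq1, Or.inl hHq⟩ with hydef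
      set y' : {B : Set (ℝ × ℝ) // B ∈ H ∪ V} := ⟨vq, Or.inr hVq⟩ with hy'def
      have hxx' : (thetaGraph H V).Adj x x' := by
        refine ⟨?_, Or.inl ⟨hH1, hVp⟩, ⟨p, hmp1, hmp2⟩⟩
        intro heq
        have hxe : x.1 = x'.1 := by rw [heq]
        refine hdisj hp1 hH1 ?_
        rw [show hp1 = vp from hxe]
        exact hVp
      have hyy' : (thetaGraph H V).Adj y y' := by
        refine ⟨?_, Or.inl ⟨hHq, hVq⟩, ⟨q, hmq1, hmq2⟩⟩
        intro heq
        have hye : y.1 = y'.1 := by rw [heq]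
        refine hdisj hq1 hHq ?_
        rw [show hq1 = vq from hye]
        exact hVq
      by_cases c1 : (thetaGraph H V).dist x y + 1 ≤ D - 2
      · exact rld_le_of_dist hgood hmp1 hmq1 c1 (by omega)
      by_cases c2 : (thetaGraph H V).dist x y' + 1 ≤ D - 2
      · exact rld_le_of_dist hgood hmp1 hmq2 c2 (by omega)
      by_cases c3 : (thetaGraph H V).dist x' y + 1 ≤ D - 2
      · exact rld_le_of_dist hgood hmp2 hmq1 c3 (by omega)
      by_cases c4 : (thetaGraph H V).dist x' y' + 1 ≤ D - 2
      · exact rld_le_of_dist hgood hmp2 hmq2 c4 (by omega)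
      -- all pairs have distance ≥ D - 2 : derive a witness pair, contradiction
      exfalso
      have hbxy := hdb x y
      have hbxy' := hdb x y'
      have hbx'y := hdb x' y
      have hbx'y' := hdb x' y'
      have hnx' : ¬ (x'.1 ∈ H) := fun h => hdisj vp h hVp
      have hny' : ¬ (y'.1 ∈ H) := fun h => hdisj vq h hVq
      have he : Even ((thetaGraph H V).dist x y) :=
        (dist_parity hgood hdisj x y).2 ⟨fun _ => hHq, fun _ => hH1⟩
      have he' : Even ((thetaGraph H V).dist x' y') :=
        (dist_parity hgood hdisj x' y').2 ⟨fun h => (hnx' h).elim, fun h => (hny' h).elim⟩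
      have ho : ¬ Even ((thetaGraph H V).dist x y') := by
        intro hev
        exact hny' ((dist_parity hgood hdisj x y').1 hev |>.1 hH1)
      have ho' : ¬ Even ((thetaGraph H V).dist x' y) := by
        intro hev
        exact hnx' ((dist_parity hgood hdisj x' y).1 hev |>.2 hHq)
      rw [Nat.even_iff] at he he'
      rw [Nat.not_even_iff] at ho ho'
      have hkey : ((thetaGraph H V).dist x y = D - 1 ∧ (thetaGraph H V).dist x' y' = D - 1)
          ∨ ((thetaGraph H V).dist x y' = D - 1 ∧ (thetaGraph H V).dist x' y = D - 1) := by
        omega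
      rcases hkey with ⟨k1, k2⟩ | ⟨k1, k2⟩
      · exact hnw ⟨x, x', y, y', hxx', hyy', by unfold oDist; omega, by unfold oDist; omega⟩
      · exact hnw ⟨x, x', y', y, hxx', hyy'.symm, by unfold oDist; omega, by unfold oDist; omega⟩
    -- attained value D - 2
    have dστ : (thetaGraph H V).dist σ0 τ0 = D - 1 := by
      unfold oDist at hσ0τ0; omega
    obtain ⟨w1, hw1⟩ := hgood.conn.exists_walk_length_eq_dist σ0 τ0
    obtain ⟨σ', hσ'⟩ := head_adj w1 (by omega)
    obtain ⟨w2, hw2⟩ := hgood.conn.exists_walk_length_eq_dist τ0 σ0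
    obtain ⟨τ', hτ'⟩ := head_adj w2 (by rw [hw2, SimpleGraph.dist_comm]; omega)
    obtain ⟨p, hpσ, hpσ', hponly⟩ := generic_point hgood hgen hσ'
    obtain ⟨q, hqτ, hqτ', hqonly⟩ := generic_point hgood hgen hτ'
    have hpP : p ∈ P := hgood.sub σ0.1 σ0.2 hpσ
    have hqP : q ∈ P := hgood.sub τ0.1 τ0.2 hqτ
    have d1 : (thetaGraph H V).dist σ0 σ' = 1 := SimpleGraph.dist_eq_one_iff_adj.2 hσ'
    have d2 : (thetaGraph H V).dist τ0 τ' = 1 := SimpleGraph.dist_eq_one_iff_adj.2 hτ'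
    have e2 : D - 3 ≤ (thetaGraph H V).dist σ0 τ' := by
      have htri := hgood.conn.dist_triangle (u := σ0) (v := τ') (w := τ0)
      have h2' : (thetaGraph H V).dist τ' τ0 = 1 := by
        rw [SimpleGraph.dist_comm]; exact d2
      omega
    have e3 : D - 3 ≤ (thetaGraph H V).dist σ' τ0 := by
      have htri := hgood.conn.dist_triangle (u := σ0) (v := σ') (w := τ0)
      omega
    have e4 : D - 3 ≤ (thetaGraph H V).dist σ' τ' := by
      have htri1 := hgood.conn.dist_triangle (u := σ0) (v := σ') (w := τ0)
      have htri2 := hgood.conn.dist_triangle (u := σ') (v := τ') (w := τ0)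
      have h2' : (thetaGraph H V).dist τ' τ0 = 1 := by
        rw [SimpleGraph.dist_comm]; exact d2
      omega
    have hlow : D - 2 ≤ rld P p q := by
      have := rld_ge hgood hdisj hpP hqP (m := D - 3) ?_
      · omega
      intro a b hpa hqb
      rcases hponly a hpa with ha | ha <;> rcases hqonly b hqb with hb | hb <;>
        rw [ha, hb]
      · omega
      · exact e2
      · exact e3
      · exact e4
    have heq : rld P p q = D - 2 := le_antisymm (upper2 p hpP q hqP) hlow
    refine IsGreatest.csSup_eq ⟨⟨p, hpP, q, hqP, heq⟩, ?_⟩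
    rintro m ⟨p', hp', q', hq', rfl⟩
    exact upper2 p' hp' q' hq'

end Assembly

/-- The diameter dichotomy (geometric form of the paper's Theorem 1). Assuming the
generic-points property and `ôdiam ≥ 4`: if there exist vertices `i, i', j, j'` of `Θ`
with `i` adjacent to `i'` and `j` adjacent to `j'` such that `Ô(i,j) = ôdiam` and
`Ô(i',j') = ôdiam`, then `diam(P) = ôdiam − 1`; otherwise `diam(P) = ôdiam − 2`. -/
theorem rldDiam_dichotomy (P : Set (ℝ × ℝ)) (H V : Set (Set (ℝ × ℝ)))
    (hgood : GoodDecomp P H V)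
    (hgen : ∀ h ∈ H, ∀ v ∈ V, (h ∩ v).Nonempty →
      ∃ x ∈ h ∩ v, ∀ B ∈ H ∪ V, x ∈ B → B = h ∨ B = v)
    (hD : 4 ≤ oDiamTheta H V) :
    ((∃ i i' j j' : {B : Set (ℝ × ℝ) // B ∈ H ∪ V},
        (thetaGraph H V).Adj i i' ∧ (thetaGraph H V).Adj j j' ∧
          oDist H V i j = oDiamTheta H V ∧ oDist H V i' j' = oDiamTheta H V) →
      rldDiam P = oDiamTheta H V - 1) ∧
    ((¬ ∃ i i' j j' : {B : Set (ℝ × ℝ) // B ∈ H ∪ V},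
        (thetaGraph H V).Adj i i' ∧ (thetaGraph H V).Adj j j' ∧
          oDist H V i j = oDiamTheta H V ∧ oDist H V i' j' = oDiamTheta H V) →
      rldDiam P = oDiamTheta H V - 2) :=
  rldDiam_dichotomy' P H V hgood hgen hD
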